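/- Let δ₁ : Matrix (Fin M₁) (Fin M₁) (ZMod 2) and δ₂ : Matrix (Fin M₂) (Fin M₂) (ZMod 2) satisfy δ₁·δ₁ = 0 and δ₂·δ₂ = 0, and let d₁, d₂ be natural numbers. Assume that every u ∈ ker δ₁ not in the column space of δ₁ has wt(u) ≥ d₁, and every v ∈ ker δ₂ not in the column space of δ₂ has wt(v) ≥ d₂. Then every M₁×M₂ matrix ψ over ZMod 2 with δ₁·ψ + ψ·δ₂ᵀ = 0 that is not of the form δ₁·φ + φ·δ₂ᵀ satisfies wt(ψ) ≥ max(d₁, d₂). -/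

import Mathlib

open Matrix Submodule LinearMap

lemma exists_homotopy {F V : Type*} [Field F] [AddCommGroup V] [Module F V]
    (f : V →ₗ[F] V) (hf : ∀ v, f (f v) = 0) :
    ∃ h π : V →ₗ[F] V, (∀ v, f (h v) + h (f v) + π v = v) ∧
      (∀ v, f (π v) = 0) ∧ (∀ v, π (f v) = 0) ∧ (∀ v, π (π v) = π v) := by
  classical
  set K := LinearMap.ker f with hKdef
  set B := LinearMap.range f with hBdef
  have hBK : B ≤ K := by
    rintro x ⟨y, rfl⟩
    exact hf y
  obtain ⟨C, hC⟩ := K.exists_isCompl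
  obtain ⟨D, hD⟩ := (B ⊔ C).exists_isCompl
  have hBW : IsCompl B (C ⊔ D) := by
    constructor
    · rw [Submodule.disjoint_def]
      intro x hxB hxCD
      rw [Submodule.mem_sup] at hxCD
      obtain ⟨c, hc, d, hd, rfl⟩ := hxCD
      have hdBC : d ∈ B ⊔ C := by
        have : d = (c + d) - c := (add_sub_cancel_left c d).symm
        rw [this]
        exact Submodule.sub_mem _ (le_sup_left (a := B) (b := C) hxB)
          (le_sup_right (a := B) (b := C) hc)
      have hd0 : d = 0 := hD.disjoint.le_bot ⟨hdBC, hd⟩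
      subst hd0
      rw [add_zero] at hxB ⊢
      exact hC.disjoint.le_bot ⟨hBK hxB, hc⟩
    · rw [codisjoint_iff, ← sup_assoc]
      exact codisjoint_iff.mp hD.codisjoint
  set pK := K.linearProjOfIsCompl C hC with hpKdef
  set pC := C.linearProjOfIsCompl K hC.symm with hpCdef
  set q := B.linearProjOfIsCompl (C ⊔ D) hBW with hqdef
  have hsplit : ∀ v : V, (pK v : V) + (pC v : V) = v := fun v =>
    Submodule.projection_add_projection_eq_self hC v
  have hgmem : ∀ c : C, (f.comp C.subtype) c ∈ B := fun c => LinearMap.mem_range_self f (c : V)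
  set g : C →ₗ[F] B := LinearMap.codRestrict B (f ∘ₗ C.subtype) hgmem with hgdef
  have hgapply : ∀ c : C, (g c : V) = f c := fun c => rfl
  have hginj : Function.Injective g := by
    intro c c' hcc
    have : f ((c : V) - (c' : V)) = 0 := by
      rw [map_sub, sub_eq_zero]
      exact congrArg Subtype.val hcc
    have hmem : ((c : V) - (c' : V)) ∈ K := this
    have : (c : V) - (c' : V) = 0 :=
      hC.symm.disjoint.le_bot ⟨Submodule.sub_mem _ c.2 c'.2, hmem⟩
    exact Subtype.ext (sub_eq_zero.mp this)
  have hgsurj : Function.Surjective g := by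
    rintro ⟨b, hb⟩
    obtain ⟨v, rfl⟩ := hb
    refine ⟨pC v, ?_⟩
    apply Subtype.ext
    show f (pC v : V) = f v
    have h1 : f ((pK v : V) + (pC v : V)) = f v := by rw [hsplit]
    have h2 : f (pK v : V) = 0 := (pK v).2
    rw [map_add, h2, zero_add] at h1
    exact h1
  set e := LinearEquiv.ofBijective g ⟨hginj, hgsurj⟩ with hedef
  have heapply : ∀ c : C, e c = g c := fun c => rfl
  set h : V →ₗ[F] V := C.subtype ∘ₗ (e.symm : B →ₗ[F] C) ∘ₗ q with hhdef
  set π : V →ₗ[F] V := K.subtype ∘ₗ pK - B.subtype ∘ₗ (q ∘ₗ (K.subtype ∘ₗ pK)) with hπdef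
  have hhval : ∀ v : V, h v = ((e.symm (q v) : C) : V) := fun v => rfl
  have hπval : ∀ v : V, π v = (pK v : V) - (q ((pK v : V)) : V) := fun v => rfl
  -- q vanishes on C
  have hqC : ∀ c : C, q (c : V) = 0 := fun c =>
    Submodule.projectionOnto_apply_of_mem_right hBW (le_sup_left (a := C) (b := D) c.2)
  -- q fixes B
  have hqB : ∀ (x : V) (hx : x ∈ B), (q x : V) = x := fun x hx =>
    congrArg Subtype.val (Submodule.linearProjOfIsCompl_apply_left hBW ⟨x, hx⟩)
  have hqsplit : ∀ v : V, q v = q ((pK v : V)) := by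
    intro v
    conv_lhs => rw [← hsplit v]
    rw [map_add, hqC, add_zero]
  -- f ∘ h = q
  have hfh : ∀ v : V, f (h v) = (q v : V) := by
    intro v
    rw [hhval]
    have : f ((e.symm (q v) : C) : V) = (g (e.symm (q v)) : V) := rfl
    rw [this]
    have := heapply (e.symm (q v))
    rw [← this, e.apply_symm_apply]
  -- h ∘ f = pC
  have hhf : ∀ v : V, h (f v) = (pC v : V) := by
    intro v
    rw [hhval]
    have hfvB : f v ∈ B := LinearMap.mem_range_self f v
    have hq : q (f v) = ⟨f v, hfvB⟩ := Submodule.linearProjOfIsCompl_apply_left hBW ⟨f v, hfvB⟩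
    rw [hq]
    congr 1
    rw [LinearEquiv.symm_apply_eq, heapply]
    apply Subtype.ext
    rw [hgapply]
    show f v = f (pC v : V)
    have h1 : f ((pK v : V) + (pC v : V)) = f v := by rw [hsplit]
    have h2 : f (pK v : V) = 0 := (pK v).2
    rw [map_add, h2, zero_add] at h1
    exact h1.symm
  refine ⟨h, π, ?_, ?_, ?_, ?_⟩
  · intro v
    rw [hfh, hhf, hπval, ← hqsplit]
    have := hsplit v
    linear_combination (norm := abel) this
  · intro v
    rw [hπval, map_sub]
    have h1 : f (pK v : V) = 0 := (pK v).2
    have h2 : f ((q ((pK v : V)) : V)) = 0 := hBK (q ((pK v : V))).2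
    rw [h1, h2, sub_zero]
  · intro v
    rw [hπval]
    have hfvK : f v ∈ K := hf v
    have hpKfv : pK (f v) = ⟨f v, hfvK⟩ :=
      Submodule.linearProjOfIsCompl_apply_left hC ⟨f v, hfvK⟩
    rw [hpKfv]
    show f v - (q (f v) : V) = 0
    rw [hqB (f v) (LinearMap.mem_range_self f v), sub_self]
  · intro v
    rw [hπval v]
    set u := (pK v : V) - (q ((pK v : V)) : V) with hu
    have huK : u ∈ K := Submodule.sub_mem _ (pK v).2 (hBK (q ((pK v : V))).2)
    have hpKu : pK u = ⟨u, huK⟩ := Submodule.linearProjOfIsCompl_apply_left hC ⟨u, huK⟩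
    have hqu : q u = 0 := by
      rw [hu, map_sub]
      have : (q ((q ((pK v : V)) : V))) = q ((pK v : V)) := by
        apply Subtype.ext
        rw [hqB _ (q ((pK v : V))).2]
      rw [this, sub_self]
    rw [hπval u, hpKu]
    show u - (q u : V) = u
    rw [hqu]
    simp


/-- The weight of a vector over `ZMod 2`: its number of nonzero entries. -/
def wt {n : ℕ} (v : Fin n → ZMod 2) : ℕ :=
  (Finset.univ.filter fun i => v i ≠ 0).card

/-- The weight of a matrix over `ZMod 2`: its number of nonzero entries. -/
def mwt {m n : ℕ} (A : Matrix (Fin m) (Fin n) (ZMod 2)) : ℕ :=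
  (Finset.univ.filter fun p : Fin m × Fin n => A p.1 p.2 ≠ 0).card

lemma matrix_ext_of_mulVec {n : ℕ} {A B : Matrix (Fin n) (Fin n) (ZMod 2)}
    (hAB : ∀ v, A.mulVec v = B.mulVec v) : A = B :=
  Matrix.toLin'.injective (LinearMap.ext fun v => by
    simpa [Matrix.toLin'_apply] using hAB v)

lemma exists_matrix_homotopy {n : ℕ} (δ : Matrix (Fin n) (Fin n) (ZMod 2)) (hδ : δ * δ = 0) :
    ∃ H P : Matrix (Fin n) (Fin n) (ZMod 2),
      δ * H + H * δ + P = 1 ∧ δ * P = 0 ∧ P * δ = 0 ∧ P * P = P := by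
  obtain ⟨h, π, hid, hfπ, hπf, hππ⟩ := exists_homotopy (Matrix.toLin' δ) (by
    intro v
    rw [Matrix.toLin'_apply, Matrix.toLin'_apply, Matrix.mulVec_mulVec, hδ, Matrix.zero_mulVec])
  refine ⟨LinearMap.toMatrix' h, LinearMap.toMatrix' π, ?_, ?_, ?_, ?_⟩
  all_goals apply matrix_ext_of_mulVec; intro v
  · simpa only [← Matrix.toLin'_apply, map_add, map_zero, Matrix.toLin'_mul, Matrix.toLin'_one,
      Matrix.toLin'_toMatrix', LinearMap.add_apply, LinearMap.comp_apply, LinearMap.zero_apply,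
      LinearMap.id_apply] using hid v
  · simpa only [← Matrix.toLin'_apply, map_add, map_zero, Matrix.toLin'_mul, Matrix.toLin'_one,
      Matrix.toLin'_toMatrix', LinearMap.add_apply, LinearMap.comp_apply, LinearMap.zero_apply,
      LinearMap.id_apply] using hfπ v
  · simpa only [← Matrix.toLin'_apply, map_add, map_zero, Matrix.toLin'_mul, Matrix.toLin'_one,
      Matrix.toLin'_toMatrix', LinearMap.add_apply, LinearMap.comp_apply, LinearMap.zero_apply,
      LinearMap.id_apply] using hπf v
  · simpa only [← Matrix.toLin'_apply, map_add, map_zero, Matrix.toLin'_mul, Matrix.toLin'_one,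
      Matrix.toLin'_toMatrix', LinearMap.add_apply, LinearMap.comp_apply, LinearMap.zero_apply,
      LinearMap.id_apply] using hππ v

lemma wt_mulVec_le {m n : ℕ} (ψ : Matrix (Fin m) (Fin n) (ZMod 2)) (w : Fin n → ZMod 2) :
    wt (ψ.mulVec w) ≤ mwt ψ := by
  classical
  unfold wt mwt
  by_cases hn : Nonempty (Fin n)
  · have hrow : ∀ i ∈ Finset.univ.filter fun i => ψ.mulVec w i ≠ 0, ∃ j, ψ i j ≠ 0 := by
      intro i hi
      rw [Finset.mem_filter] at hi
      have : ∑ j, ψ i j * w j ≠ 0 := hi.2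
      obtain ⟨j, _, hj⟩ := Finset.exists_ne_zero_of_sum_ne_zero this
      exact ⟨j, fun h0 => hj (by rw [h0, zero_mul])⟩
    set f : Fin m → Fin m × Fin n := fun i =>
      (i, if h : ∃ j, ψ i j ≠ 0 then h.choose else Classical.arbitrary (Fin n)) with hf
    apply Finset.card_le_card_of_injOn f
    · intro i hi
      obtain ⟨j, hj⟩ := hrow i hi
      rw [Finset.mem_coe, Finset.mem_filter]
      refine ⟨Finset.mem_univ _, ?_⟩
      have hex : ∃ j, ψ i j ≠ 0 := ⟨j, hj⟩
      simp only [hf, dif_pos hex]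
      exact hex.choose_spec
    · intro i _ i' _ hii
      exact congrArg Prod.fst hii
  · have hie : IsEmpty (Fin n) := not_nonempty_iff.mp hn
    have : ∀ i, ψ.mulVec w i = 0 := by
      intro i
      rw [Matrix.mulVec, dotProduct, Finset.univ_eq_empty, Finset.sum_empty]
    simp [this]

lemma zmod2_add_eq_zero {a b : ZMod 2} (h : a + b = 0) : a = b := by
  revert h; revert a b; decide

lemma mwt_transpose {m n : ℕ} (A : Matrix (Fin m) (Fin n) (ZMod 2)) : mwt Aᵀ = mwt A := by
  unfold mwt
  apply Finset.card_bij' (fun p _ => (p.2, p.1)) (fun p _ => (p.2, p.1)) <;>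
    simp [Matrix.transpose_apply]
  · intro a b h; exact (Finset.mem_filter.mp h).2
  · intro a b h; exact Finset.mem_filter.mpr ⟨Finset.mem_univ _, h⟩

lemma key_bound {M₁ M₂ : ℕ} (d₁ : ℕ)
    (δ₁ : Matrix (Fin M₁) (Fin M₁) (ZMod 2)) (δ₂ : Matrix (Fin M₂) (Fin M₂) (ZMod 2))
    (h₂ : δ₂ * δ₂ = 0)
    (hd₁ : ∀ u : Fin M₁ → ZMod 2, δ₁.mulVec u = 0 →
      (¬ ∃ x : Fin M₁ → ZMod 2, δ₁.mulVec x = u) → d₁ ≤ wt u)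
    (ψ : Matrix (Fin M₁) (Fin M₂) (ZMod 2))
    (hc : δ₁ * ψ + ψ * δ₂ᵀ = 0)
    (hb : ¬ ∃ φ : Matrix (Fin M₁) (Fin M₂) (ZMod 2), ψ = δ₁ * φ + φ * δ₂ᵀ) :
    d₁ ≤ mwt ψ := by
  classical
  have heq : δ₁ * ψ = ψ * δ₂ᵀ := by
    ext i j
    exact zmod2_add_eq_zero (by
      have := congrFun (congrFun hc i) j
      simpa [Matrix.add_apply] using this)
  by_cases hall : ∀ w : Fin M₂ → ZMod 2, δ₂ᵀ.mulVec w = 0 →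
      ∃ x : Fin M₁ → ZMod 2, δ₁.mulVec x = ψ.mulVec w
  · exfalso
    apply hb
    obtain ⟨H, P, hid, hδP, hPδ, hPP⟩ := exists_matrix_homotopy δ₂ h₂
    have hrow : ∀ j : Fin M₂, δ₂ᵀ.mulVec (fun k => P j k) = 0 := by
      intro j
      ext i
      have : (P * δ₂) j i = 0 := by rw [hPδ]; rfl
      rw [Matrix.mul_apply] at this
      simpa [Matrix.mulVec, dotProduct, Matrix.transpose_apply, mul_comm] using this
    choose X hX using fun j => hall _ (hrow j)
    set Y : Matrix (Fin M₁) (Fin M₂) (ZMod 2) := Matrix.of fun i j => X j i with hY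
    have hδY : δ₁ * Y = ψ * Pᵀ := by
      ext i j
      have := congrFun (hX j) i
      simp only [Matrix.mulVec, dotProduct] at this
      simp only [Matrix.mul_apply, hY, Matrix.of_apply, Matrix.transpose_apply]
      exact this
    refine ⟨ψ * Hᵀ + Y * Pᵀ, ?_⟩
    have e1 : δ₁ * (ψ * Hᵀ) = ψ * (H * δ₂)ᵀ := by
      rw [← Matrix.mul_assoc, heq, Matrix.mul_assoc, Matrix.transpose_mul]
    have e2 : (ψ * Hᵀ) * δ₂ᵀ = ψ * (δ₂ * H)ᵀ := by
      rw [Matrix.mul_assoc, Matrix.transpose_mul]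
    have e3 : δ₁ * (Y * Pᵀ) = ψ * Pᵀ := by
      rw [← Matrix.mul_assoc, hδY, Matrix.mul_assoc, ← Matrix.transpose_mul, hPP]
    have e4 : (Y * Pᵀ) * δ₂ᵀ = 0 := by
      rw [Matrix.mul_assoc, ← Matrix.transpose_mul, hδP, Matrix.transpose_zero, Matrix.mul_zero]
    rw [Matrix.mul_add, Matrix.add_mul, e1, e2, e3, e4, add_zero]
    have hsum : (H * δ₂)ᵀ + Pᵀ + (δ₂ * H)ᵀ = 1 := by
      rw [← Matrix.transpose_add, ← Matrix.transpose_add, ← Matrix.transpose_one]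
      congr 1
      rw [← hid]
      abel
    calc ψ = ψ * (1 : Matrix (Fin M₂) (Fin M₂) (ZMod 2)) := (Matrix.mul_one ψ).symm
      _ = ψ * ((H * δ₂)ᵀ + Pᵀ + (δ₂ * H)ᵀ) := by rw [hsum]
      _ = ψ * (H * δ₂)ᵀ + ψ * Pᵀ + ψ * (δ₂ * H)ᵀ := by rw [Matrix.mul_add, Matrix.mul_add]
  · push_neg at hall
    obtain ⟨w, hw0, hwb⟩ := hall
    have hker : δ₁.mulVec (ψ.mulVec w) = 0 := by
      rw [Matrix.mulVec_mulVec, heq, ← Matrix.mulVec_mulVec, hw0, Matrix.mulVec_zero]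
    calc d₁ ≤ wt (ψ.mulVec w) := hd₁ _ hker (not_exists.mpr hwb)
      _ ≤ mwt ψ := wt_mulVec_le ψ w

/-- Lower bound on the distance of the product: if every nontrivial cycle of `δₐ` has
weight at least `dₐ`, then every nontrivial cycle of the product boundary map
`∂ψ = δ₁ψ + ψδ₂ᵀ` has weight at least `max(d₁, d₂)`. -/
theorem product_cycle_lower_bound (M₁ M₂ d₁ d₂ : ℕ)
    (δ₁ : Matrix (Fin M₁) (Fin M₁) (ZMod 2)) (δ₂ : Matrix (Fin M₂) (Fin M₂) (ZMod 2))
    (h₁ : δ₁ * δ₁ = 0) (h₂ : δ₂ * δ₂ = 0)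
    (hd₁ : ∀ u : Fin M₁ → ZMod 2, δ₁.mulVec u = 0 →
      (¬ ∃ x : Fin M₁ → ZMod 2, δ₁.mulVec x = u) → d₁ ≤ wt u)
    (hd₂ : ∀ v : Fin M₂ → ZMod 2, δ₂.mulVec v = 0 →
      (¬ ∃ y : Fin M₂ → ZMod 2, δ₂.mulVec y = v) → d₂ ≤ wt v) :
    ∀ ψ : Matrix (Fin M₁) (Fin M₂) (ZMod 2), δ₁ * ψ + ψ * δ₂ᵀ = 0 →
      (¬ ∃ φ : Matrix (Fin M₁) (Fin M₂) (ZMod 2), ψ = δ₁ * φ + φ * δ₂ᵀ) →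
      max d₁ d₂ ≤ mwt ψ := by
  intro ψ hc hb
  apply max_le
  · exact key_bound d₁ δ₁ δ₂ h₂ hd₁ ψ hc hb
  · have hcT : δ₂ * ψᵀ + ψᵀ * δ₁ᵀ = 0 := by
      have h := congrArg Matrix.transpose hc
      rw [Matrix.transpose_add, Matrix.transpose_mul, Matrix.transpose_mul,
        Matrix.transpose_transpose, Matrix.transpose_zero, add_comm] at h
      exact h
    have hbT : ¬ ∃ φ : Matrix (Fin M₂) (Fin M₁) (ZMod 2), ψᵀ = δ₂ * φ + φ * δ₁ᵀ := by
      rintro ⟨φ, hφ⟩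
      apply hb
      refine ⟨φᵀ, ?_⟩
      have h := congrArg Matrix.transpose hφ
      rw [Matrix.transpose_add, Matrix.transpose_mul, Matrix.transpose_mul,
        Matrix.transpose_transpose, Matrix.transpose_transpose, add_comm] at h
      exact h
    have hk := key_bound d₂ δ₂ δ₁ h₁ hd₂ ψᵀ hcT hbT
    rwa [mwt_transpose] at hk
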